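/- If (G, τ) is a Hausdorff saturated first-countable paratopological group, then G is submetrizable. -/

import Mathlib

open Topology Pointwise Filter Set Uniformity

section Aux

/-- A group with a group filter basis whose filter is countably generated and whose
sets separate points from `1` carries a metrizable group topology. -/
theorem groupFilterBasis_metrizable {H : Type*} [Group H] (B : GroupFilterBasis H)
    (hcg : B.toFilterBasis.filter.IsCountablyGenerated)
    (hsep : ∀ x : H, x ≠ 1 → ∃ V ∈ B, x ∉ V) :
    @TopologicalSpace.MetrizableSpace H B.topology := by
  letI := B.topology
  haveI : IsTopologicalGroup H := B.isTopologicalGroup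
  haveI : (𝓝 (1 : H)).IsCountablyGenerated := by
    rw [B.nhds_one_eq]; exact hcg
  haveI : T2Space H := by
    apply IsTopologicalGroup.t2Space_of_one_sep
    intro x hx
    obtain ⟨V, hVB, hxV⟩ := hsep x hx
    exact ⟨V, B.mem_nhds_one hVB, hxV⟩
  letI : UniformSpace H := IsTopologicalGroup.rightUniformSpace H
  haveI : (𝓤 H).IsCountablyGenerated := by
    rw [uniformity_eq_comap_nhds_one']
    infer_instance
  exact UniformSpace.metrizableSpace

end Aux

/-- If `(G, τ)` is a Hausdorff saturated first-countable paratopological group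
(saturated: for every neighborhood `U` of the identity, `U⁻¹` has nonempty interior),
then `G` is submetrizable: there is a metrizable topology on `G` coarser than `τ`. -/
theorem hausdorff_saturated_firstCountable_paratopological_group_submetrizable
    {G : Type*} [Group G] [t : TopologicalSpace G] [T2Space G] [ContinuousMul G]
    [FirstCountableTopology G]
    (hsat : ∀ U ∈ 𝓝 (1 : G), (interior U⁻¹).Nonempty) :
    ∃ t' : TopologicalSpace G, t ≤ t' ∧ @TopologicalSpace.MetrizableSpace G t' := by
  classical
  -- key consequence of saturation
  have keyC : ∀ S ∈ 𝓝 (1 : G), ∃ V ∈ 𝓝 (1 : G), V ⊆ S ∧ V⁻¹ * V ⊆ S * S⁻¹ := by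
    intro S hS
    obtain ⟨x, hx⟩ := hsat S hS
    refine ⟨S ∩ (x⁻¹ • interior S⁻¹), ?_, inter_subset_left, ?_⟩
    · refine Filter.inter_mem hS ?_
      have hopen : IsOpen (x⁻¹ • interior S⁻¹) :=
        (Homeomorph.mulLeft x⁻¹).isOpenMap _ isOpen_interior
      refine hopen.mem_nhds ?_
      exact ⟨x, hx, by simp⟩
    · rintro z ⟨a, ha, b, hb, rfl⟩
      rw [Set.mem_inv] at ha
      obtain ⟨a', ha', haa⟩ := ha.2
      obtain ⟨b', hb', hbb⟩ := hb.2
      have ha'' : a'⁻¹ ∈ S := Set.mem_inv.1 (interior_subset ha')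
      have hb'' : b' ∈ S⁻¹ := interior_subset hb'
      refine ⟨a'⁻¹, ha'', b', hb'', ?_⟩
      have h1 : a = (x⁻¹ * a')⁻¹ := by
        have : x⁻¹ * a' = a⁻¹ := haa
        rw [this, inv_inv]
      have h2 : b = x⁻¹ * b' := hbb.symm
      show a'⁻¹ * b' = a * b
      rw [h1, h2]
      group
  -- the group filter basis of sets U * U⁻¹
  let Bsets : Set (Set G) := {W | ∃ U ∈ 𝓝 (1 : G), W = U * U⁻¹}
  have mem_UU : ∀ U ∈ 𝓝 (1 : G), (U * U⁻¹) ∈ Bsets := fun U hU => ⟨U, hU, rfl⟩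
  have one_mem : ∀ U ∈ 𝓝 (1 : G), (1 : G) ∈ U * U⁻¹ := by
    intro U hU
    exact ⟨1, mem_of_mem_nhds hU, 1, by simpa using mem_of_mem_nhds hU, by simp⟩
  let B : GroupFilterBasis G :=
    { sets := Bsets
      nonempty := ⟨Set.univ * Set.univ⁻¹, mem_UU _ univ_mem⟩
      inter_sets := by
        rintro _ _ ⟨U₁, hU₁, rfl⟩ ⟨U₂, hU₂, rfl⟩
        refine ⟨(U₁ ∩ U₂) * (U₁ ∩ U₂)⁻¹, mem_UU _ (Filter.inter_mem hU₁ hU₂), ?_⟩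
        exact subset_inter
          (Set.mul_subset_mul inter_subset_left (Set.inv_subset_inv.2 inter_subset_left))
          (Set.mul_subset_mul inter_subset_right (Set.inv_subset_inv.2 inter_subset_right))
      one' := by
        rintro _ ⟨U, hU, rfl⟩
        exact one_mem U hU
      mul' := by
        rintro _ ⟨U, hU, rfl⟩
        obtain ⟨S, hS, hSU⟩ := exists_nhds_one_split hU
        have hSU' : S * S ⊆ U := by
          rintro _ ⟨a, ha, b, hb, rfl⟩; exact hSU a ha b hb
        obtain ⟨V, hV, hVS, hVV⟩ := keyC S hS
        refine ⟨V * V⁻¹, mem_UU _ hV, ?_⟩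
        rintro _ ⟨_, ⟨v₁, hv₁, v₂, hv₂, rfl⟩, _, ⟨v₃, hv₃, v₄, hv₄, rfl⟩, rfl⟩
        -- hv₂ : v₂ ∈ V⁻¹, hv₄ : v₄ ∈ V⁻¹
        have hmid : v₂ * v₃ ∈ S * S⁻¹ := hVV ⟨v₂, hv₂, v₃, hv₃, rfl⟩
        obtain ⟨s, hs, w, hw, hsw⟩ := hmid
        -- hs : s ∈ S, hw : w ∈ S⁻¹, hsw : s * w = v₂ * v₃
        have hv₄' : v₄⁻¹ ∈ V := Set.mem_inv.1 hv₄
        refine ⟨v₁ * s, hSU' ⟨v₁, hVS hv₁, s, hs, rfl⟩, w * v₄, ?_, ?_⟩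
        · rw [Set.mem_inv, mul_inv_rev]
          exact hSU' ⟨v₄⁻¹, hVS hv₄', w⁻¹, Set.mem_inv.1 hw, rfl⟩
        · show v₁ * s * (w * v₄) = v₁ * v₂ * (v₃ * v₄)
          have hsw' : s * w = v₂ * v₃ := hsw
          have : v₁ * s * (w * v₄) = v₁ * (s * w) * v₄ := by group
          rw [this, hsw']
          group
      inv' := by
        rintro _ ⟨U, hU, rfl⟩
        refine ⟨U * U⁻¹, mem_UU _ hU, ?_⟩
        rintro _ ⟨a, ha, b, hb, rfl⟩
        show (a * b)⁻¹ ∈ U * U⁻¹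
        rw [Set.mem_inv] at hb
        exact ⟨b⁻¹, hb, a⁻¹, by rwa [Set.mem_inv, inv_inv], by rw [mul_inv_rev]⟩
      conj' := by
        intro x₀
        rintro _ ⟨U, hU, rfl⟩
        have hcont : Continuous fun y : G => x₀ * y * x₀⁻¹ :=
          (continuous_const.mul continuous_id).mul continuous_const
        have hP : (fun y : G => x₀ * y * x₀⁻¹) ⁻¹' U ∈ 𝓝 (1 : G) := by
          have h1 : Filter.Tendsto (fun y : G => x₀ * y * x₀⁻¹) (𝓝 1) (𝓝 (x₀ * 1 * x₀⁻¹)) :=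
            hcont.continuousAt
          simp only [mul_one, mul_inv_cancel] at h1
          exact h1 hU
        set P := (fun y : G => x₀ * y * x₀⁻¹) ⁻¹' U with hPdef
        refine ⟨P * P⁻¹, mem_UU _ hP, ?_⟩
        rintro _ ⟨p, hp, q, hq, rfl⟩
        show x₀ * (p * q) * x₀⁻¹ ∈ U * U⁻¹
        rw [Set.mem_inv] at hq
        have hp' : x₀ * p * x₀⁻¹ ∈ U := hp
        have hq' : x₀ * q⁻¹ * x₀⁻¹ ∈ U := hq
        refine ⟨x₀ * p * x₀⁻¹, hp', x₀ * q * x₀⁻¹, ?_, ?_⟩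
        · rw [Set.mem_inv]
          have : (x₀ * q * x₀⁻¹)⁻¹ = x₀ * q⁻¹ * x₀⁻¹ := by group
          rwa [this]
        · group }
  refine ⟨B.topology, ?_, ?_⟩
  · -- coarser than t
    rw [TopologicalSpace.le_def]
    intro s hs
    rw [isOpen_iff_mem_nhds]
    intro x hx
    have hs' : s ∈ @nhds G B.topology x := by
      letI := B.topology
      exact IsOpen.mem_nhds hs hx
    rw [B.nhds_eq] at hs'
    rw [GroupFilterBasis.N, Filter.mem_map] at hs'
    obtain ⟨V, hVB, hVs⟩ := B.toFilterBasis.mem_filter_iff.1 hs'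
    obtain ⟨U, hU, rfl⟩ := hVB
    have hxU : (fun y => x * y) '' U ∈ 𝓝 x := by
      have := (Homeomorph.mulLeft x).isOpenMap.image_mem_nhds hU
      simpa using this
    refine mem_of_superset hxU ?_
    rintro _ ⟨u, hu, rfl⟩
    have hmem : u ∈ U * U⁻¹ := ⟨u, hu, 1, by simpa using mem_of_mem_nhds hU, by simp⟩
    exact hVs hmem
  · -- metrizable
    apply groupFilterBasis_metrizable
    · -- countably generated
      obtain ⟨U, hU⟩ := (𝓝 (1 : G)).exists_antitone_basis
      have hbasis : B.toFilterBasis.filter.HasBasis (fun _ : ℕ => True)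
          (fun n => U n * (U n)⁻¹) := by
        constructor
        intro s
        rw [FilterBasis.mem_filter_iff]
        constructor
        · rintro ⟨W, hWB, hWs⟩
          have hWB' : ∃ U ∈ 𝓝 (1 : G), W = U * U⁻¹ := hWB
          obtain ⟨Wu, hWu, rfl⟩ := hWB'
          obtain ⟨n, -, hn⟩ := hU.toHasBasis.mem_iff.1 hWu
          exact ⟨n, trivial, subset_trans
            (Set.mul_subset_mul hn (Set.inv_subset_inv.2 hn)) hWs⟩
        · rintro ⟨n, -, hn⟩
          exact ⟨U n * (U n)⁻¹, mem_UU _ (hU.toHasBasis.mem_of_mem trivial), hn⟩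
      exact hbasis.isCountablyGenerated
    · -- separation
      intro x hx
      have hdisj : Disjoint (𝓝 x) (𝓝 (1 : G)) := disjoint_nhds_nhds.2 hx
      obtain ⟨A, hA, Bs, hBs, hAB⟩ := Filter.disjoint_iff.1 hdisj
      have hA' : (fun y => x⁻¹ * y) '' A ∈ 𝓝 (1 : G) := by
        have := (Homeomorph.mulLeft x⁻¹).isOpenMap.image_mem_nhds hA
        simpa using this
      set U := ((fun y => x⁻¹ * y) '' A) ∩ Bs with hUdef
      have hUnhds : U ∈ 𝓝 (1 : G) := Filter.inter_mem hA' hBs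
      refine ⟨U * U⁻¹, mem_UU _ hUnhds, ?_⟩
      rintro ⟨u, hu, v, hv, huv⟩
      -- huv : u * v = x, hu : u ∈ U, hv : v ∈ U⁻¹
      rw [Set.mem_inv] at hv
      have hu' : u ∈ Bs := hu.2
      obtain ⟨a, ha, haa⟩ := hv.1
      -- haa : x⁻¹ * a = v⁻¹
      have hu2 : u = x * v⁻¹ := by
        rw [← huv]; group
      have huA : u ∈ A := by
        have : u = a := by rw [hu2, ← haa, ← mul_assoc]; group
        rwa [this]
      exact Set.disjoint_left.1 hAB huA hu'
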